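/- For the harmonic-potential transport solution f(t,x,v) = f⁰(x cos t - v sin t, v cos t + x sin t), one has for all t with sin t ≠ 0 the mixing estimate sup_x ∫ |f(t,x,v)| dv ≤ |sin t|^{-d} ∫ sup_v |f⁰(x,v)| dx. -/

import Mathlib

open MeasureTheory Real
open scoped ENNReal NNReal

/-- Mixing estimate for the harmonic-potential transport solution
`f(t,x,v) = f⁰(x cos t - v sin t, v cos t + x sin t)`: for `sin t ≠ 0`,
`sup_x ∫ |f(t,x,v)| dv ≤ |sin t|^{-d} ∫ sup_v |f⁰(x,v)| dx`. -/
theorem harmonic_transport_mixing (d : ℕ) (hd : 1 ≤ d)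
    (f0 : EuclideanSpace ℝ (Fin d) → EuclideanSpace ℝ (Fin d) → ℝ)
    (hf0 : Measurable (fun p : EuclideanSpace ℝ (Fin d) × EuclideanSpace ℝ (Fin d) =>
      f0 p.1 p.2))
    (hG : Measurable (fun z : EuclideanSpace ℝ (Fin d) =>
      ⨆ w : EuclideanSpace ℝ (Fin d), (‖f0 z w‖₊ : ℝ≥0∞)))
    (hGfin : ∫⁻ z, ⨆ w, (‖f0 z w‖₊ : ℝ≥0∞) ≠ ⊤) :
    ∀ t : ℝ, Real.sin t ≠ 0 → ∀ x : EuclideanSpace ℝ (Fin d),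
      ∫⁻ v, (‖f0 (Real.cos t • x - Real.sin t • v) (Real.cos t • v + Real.sin t • x)‖₊ : ℝ≥0∞)
        ≤ ENNReal.ofReal (|Real.sin t| ^ (-(d : ℤ))) * ∫⁻ z, ⨆ w, (‖f0 z w‖₊ : ℝ≥0∞) := by
  intro t hst x
  set s := Real.sin t with hs
  set c := Real.cos t with hc
  set G : EuclideanSpace ℝ (Fin d) → ℝ≥0∞ := fun z => ⨆ w, (‖f0 z w‖₊ : ℝ≥0∞) with hGdef
  have hneg : (-s : ℝ) ≠ 0 := neg_ne_zero.mpr hst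
  have step1 : ∫⁻ v, (‖f0 (c • x - s • v) (c • v + s • x)‖₊ : ℝ≥0∞)
      ≤ ∫⁻ v, G (c • x + (-s) • v) := by
    refine lintegral_mono fun v => ?_
    have : c • x + (-s) • v = c • x - s • v := by
      rw [neg_smul, ← sub_eq_add_neg]
    rw [this]
    exact le_iSup (fun w => (‖f0 (c • x - s • v) w‖₊ : ℝ≥0∞)) (c • v + s • x)
  have step2 : ∫⁻ v, G (c • x + (-s) • v)
      = ENNReal.ofReal |((-s) ^ Module.finrank ℝ (EuclideanSpace ℝ (Fin d)))⁻¹| * ∫⁻ z, G z := by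
    let e : EuclideanSpace ℝ (Fin d) ≃ᵐ EuclideanSpace ℝ (Fin d) :=
      (Homeomorph.smul (isUnit_iff_ne_zero.2 hneg).unit
        (α := EuclideanSpace ℝ (Fin d))).toMeasurableEquiv
    have hmap := Measure.map_addHaar_smul (volume : Measure (EuclideanSpace ℝ (Fin d))) hneg
    have he : ⇑e = fun v : EuclideanSpace ℝ (Fin d) => -s • v := by
      funext v
      show (isUnit_iff_ne_zero.2 hneg).unit • v = -s • v
      rw [Units.smul_def, IsUnit.unit_spec]
    have hmape : Measure.map (⇑e) (volume : Measure (EuclideanSpace ℝ (Fin d)))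
        = ENNReal.ofReal |((-s) ^ Module.finrank ℝ (EuclideanSpace ℝ (Fin d)))⁻¹| • volume := by
      rw [he]; exact hmap
    calc ∫⁻ v, G (c • x + (-s) • v)
        = ∫⁻ u, G (c • x + u)
            ∂(Measure.map (⇑e) (volume : Measure (EuclideanSpace ℝ (Fin d)))) := by
          rw [MeasureTheory.lintegral_map_equiv (fun u => G (c • x + u)) e]
          simp only [he]
      _ = ENNReal.ofReal |((-s) ^ Module.finrank ℝ (EuclideanSpace ℝ (Fin d)))⁻¹|
            * ∫⁻ u, G (c • x + u) := by
          rw [hmape, lintegral_smul_measure, smul_eq_mul]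
      _ = ENNReal.ofReal |((-s) ^ Module.finrank ℝ (EuclideanSpace ℝ (Fin d)))⁻¹|
            * ∫⁻ z, G z := by
          rw [lintegral_add_left_eq_self G (c • x)]
  have hrank : Module.finrank ℝ (EuclideanSpace ℝ (Fin d)) = d := finrank_euclideanSpace_fin
  have hconst : |((-s) ^ Module.finrank ℝ (EuclideanSpace ℝ (Fin d)))⁻¹| = |s| ^ (-(d : ℤ)) := by
    rw [hrank, abs_inv, abs_pow, abs_neg, zpow_neg, zpow_natCast]
  calc ∫⁻ v, (‖f0 (c • x - s • v) (c • v + s • x)‖₊ : ℝ≥0∞)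
      ≤ ∫⁻ v, G (c • x + (-s) • v) := step1
    _ = ENNReal.ofReal |((-s) ^ Module.finrank ℝ (EuclideanSpace ℝ (Fin d)))⁻¹| * ∫⁻ z, G z :=
        step2
    _ = ENNReal.ofReal (|s| ^ (-(d : ℤ))) * ∫⁻ z, ⨆ w, (‖f0 z w‖₊ : ℝ≥0∞) := by
        rw [hconst]
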